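/- Let L be a rank r geometric lattice with complete flag F = {0̂ = F_0 < F_1 < ⋯ < F_r = 1̂}, and define A_i = coat(F_i) \ coat(F_{i+1}) for 0 ≤ i ≤ r−1, where coat(X) is the set of coatoms of L that are ≥ X. Then each A_i is nonempty and {A_0, …, A_{r−1}} is a partition of the set of coatoms of L. -/

import Mathlib

/-- A geometric lattice: a finite ranked lattice in which every element is a
join of atoms and the rank function is semimodular. -/
structure IsGeometricLattice (L : Type*) [Lattice L] [BoundedOrder L] [Finite L]
    (rk : L → ℕ) : Prop where
  rank_bot : rk ⊥ = 0
  rank_strictMono : StrictMono rk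
  rank_covBy : ∀ x y : L, x ⋖ y → rk y = rk x + 1
  atomistic : ∀ x : L, ∃ s : Finset L, (∀ a ∈ s, IsAtom a) ∧ x = s.sup id
  semimodular : ∀ x y : L, rk (x ⊓ y) + rk (x ⊔ y) ≤ rk x + rk y

/-- The set of coatoms of `L` lying above `X`. -/
def coatomsAbove {L : Type*} [Lattice L] [BoundedOrder L] (X : L) : Set L :=
  {C | IsCoatom C ∧ X ≤ C}

/-- A complete flag `⊥ = F 0 ⋖ F 1 ⋖ ⋯ ⋖ F r = ⊤` (a maximal chain) in a
rank `r` lattice, recorded as a sequence of covers. -/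
def IsCompleteFlag {L : Type*} [Lattice L] [BoundedOrder L] {r : ℕ}
    (F : Fin (r + 1) → L) : Prop :=
  F 0 = ⊥ ∧ F (Fin.last r) = ⊤ ∧ ∀ i : Fin r, F i.castSucc ⋖ F i.succ

/-- If a predicate on `Fin (r+1)` holds at `0` but not at `last r`, it flips
somewhere. -/
lemma exists_flip {r : ℕ} (P : Fin (r + 1) → Prop) (h0 : P 0)
    (h1 : ¬ P (Fin.last r)) : ∃ i : Fin r, P i.castSucc ∧ ¬ P i.succ := by
  classical
  set g : ℕ → Prop := fun n => P ⟨min n r, by omega⟩ with hg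
  have hgr : ¬ g r := by simpa [hg, Fin.last] using h1
  have hex : ∃ n, ¬ g n := ⟨r, hgr⟩
  set n := Nat.find hex with hn
  have hngood : ¬ g n := Nat.find_spec hex
  have hnr : n ≤ r := Nat.find_le hgr
  have hn0 : n ≠ 0 := by
    intro h
    apply hngood
    rw [h]
    simpa [hg] using h0
  have hprev : g (n - 1) := by
    by_contra h
    exact Nat.find_min hex (by omega) h
  refine ⟨⟨n - 1, by omega⟩, ?_, ?_⟩
  · have : ((⟨n - 1, by omega⟩ : Fin r).castSucc : Fin (r + 1)) = ⟨min (n - 1) r, by omega⟩ := by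
      apply Fin.ext
      simp [Fin.castSucc]
      omega
    rw [this]
    exact hprev
  · have : ((⟨n - 1, by omega⟩ : Fin r).succ : Fin (r + 1)) = ⟨min n r, by omega⟩ := by
      apply Fin.ext
      simp [Fin.succ]
      omega
    rw [this]
    exact hngood

/-- For a complete flag `F` in a rank `r` geometric lattice, the sets
`A i = coat(F i) \ coat(F (i+1))` are nonempty and partition the coatoms. -/
theorem flag_coatom_partition {L : Type*} [Lattice L] [BoundedOrder L] [Finite L]
    {rk : L → ℕ} (hL : IsGeometricLattice L rk) {r : ℕ} (hr : rk ⊤ = r)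
    (F : Fin (r + 1) → L) (hF : IsCompleteFlag F)
    (A : Fin r → Set L)
    (hA : ∀ i : Fin r, A i = coatomsAbove (F i.castSucc) \ coatomsAbove (F i.succ)) :
    (∀ i : Fin r, (A i).Nonempty) ∧
    (∀ i j : Fin r, i ≠ j → Disjoint (A i) (A j)) ∧
    (⋃ i : Fin r, A i) = {C : L | IsCoatom C} := by
  classical
  obtain ⟨hF0, hFlast, hFcov⟩ := hF
  have hFsm : StrictMono F := Fin.strictMono_iff_lt_succ.mpr (fun i => (hFcov i).lt)
  have hFmono : Monotone F := hFsm.monotone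
  -- rank of an atom is 1
  have hrkatom : ∀ b : L, IsAtom b → rk b = 1 := by
    intro b hb
    have := hL.rank_covBy ⊥ b hb.bot_covBy
    rw [hL.rank_bot] at this
    omega
  -- joining an atom not below x covers x
  have hcovsup : ∀ (x b : L), IsAtom b → ¬ b ≤ x → x ⋖ x ⊔ b := by
    intro x b hb hbx
    have hinf : x ⊓ b = ⊥ := by
      rcases (inf_le_right : x ⊓ b ≤ b).lt_or_eq with h' | h'
      · exact hb.2 _ h'
      · exact absurd (h' ▸ inf_le_left) hbx
    have hlt : x < x ⊔ b := lt_of_le_of_ne le_sup_left (fun h => hbx (h ▸ le_sup_right))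
    have hsem := hL.semimodular x b
    rw [hinf, hL.rank_bot, hrkatom b hb] at hsem
    refine ⟨hlt, ?_⟩
    intro z hz1 hz2
    have r1 : rk x < rk z := hL.rank_strictMono hz1
    have r2 : rk z < rk (x ⊔ b) := hL.rank_strictMono hz2
    omega
  -- nonemptiness
  have hne : ∀ i : Fin r, (A i).Nonempty := by
    intro i
    have hcov := hFcov i
    obtain ⟨s, hs, hsup⟩ := hL.atomistic (F i.succ)
    have hexa : ∃ a ∈ s, ¬ a ≤ F i.castSucc := by
      by_contra h
      push_neg at h
      have : F i.succ ≤ F i.castSucc := hsup ▸ Finset.sup_le h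
      exact absurd this hcov.lt.not_ge
    obtain ⟨a, has, haF⟩ := hexa
    have hatom : IsAtom a := hs a has
    have haFsucc : a ≤ F i.succ := hsup ▸ Finset.le_sup (f := id) has
    -- maximal element above F i.castSucc not above a
    have hFS : F i.castSucc ∈ {x : L | F i.castSucc ≤ x ∧ ¬ a ≤ x} := ⟨le_rfl, haF⟩
    obtain ⟨C, hCS, hCmax⟩ : ∃ C ∈ {x : L | F i.castSucc ≤ x ∧ ¬ a ≤ x},
        ∀ x ∈ {x : L | F i.castSucc ≤ x ∧ ¬ a ≤ x}, id C ≤ id x → id C = id x := by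
      obtain ⟨C, hCS, hCmax⟩ :=
        Set.Finite.exists_maximalFor id {x : L | F i.castSucc ≤ x ∧ ¬ a ≤ x}
          (Set.toFinite _) ⟨_, hFS⟩
      exact ⟨C, hCS, fun x hx hle => le_antisymm hle (hCmax hx hle)⟩
    simp only [id] at hCmax
    have hCa : C ⋖ C ⊔ a := hcovsup C a hatom hCS.2
    have hCtop : C ⊔ a = ⊤ := by
      by_contra hne'
      obtain ⟨t, ht, htsup⟩ := hL.atomistic (⊤ : L)
      have hexb : ∃ b ∈ t, ¬ b ≤ C ⊔ a := by
        by_contra h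
        push_neg at h
        exact hne' (le_antisymm le_top (htsup ▸ Finset.sup_le h))
      obtain ⟨b, hbt, hbCa⟩ := hexb
      have hbC : ¬ b ≤ C := fun h => hbCa (h.trans le_sup_left)
      have hCb : C ⋖ C ⊔ b := hcovsup C b (ht b hbt) hbC
      have haCb : a ≤ C ⊔ b := by
        by_contra h
        have hmem : C ⊔ b ∈ {x : L | F i.castSucc ≤ x ∧ ¬ a ≤ x} :=
          ⟨hCS.1.trans le_sup_left, h⟩
        have heq := hCmax _ hmem le_sup_left
        exact hbC (heq ▸ le_sup_right)
      have hle : C ⊔ a ≤ C ⊔ b := sup_le le_sup_left haCb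
      rcases hle.lt_or_eq with h | h
      · exact hCb.2 hCa.lt h
      · exact hbCa (h ▸ le_sup_right)
    have hCcoatom : IsCoatom C := by
      constructor
      · intro h
        exact hCS.2 (h ▸ le_top)
      · intro y hy
        have haY : a ≤ y := by
          by_contra h
          have hmem : y ∈ {x : L | F i.castSucc ≤ x ∧ ¬ a ≤ x} :=
            ⟨hCS.1.trans hy.le, h⟩
          exact absurd (hCmax _ hmem hy.le) hy.ne
        have : (⊤ : L) ≤ y := hCtop ▸ sup_le hy.le haY
        exact top_le_iff.mp this
    refine ⟨C, ?_⟩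
    rw [hA i]
    exact ⟨⟨hCcoatom, hCS.1⟩, fun hc => hCS.2 (haFsucc.trans hc.2)⟩
  refine ⟨hne, ?_, ?_⟩
  · -- disjointness
    have key : ∀ i j : Fin r, i < j → Disjoint (A i) (A j) := by
      intro i j hij
      rw [Set.disjoint_left]
      intro x hxi hxj
      rw [hA i] at hxi
      rw [hA j] at hxj
      apply hxi.2
      have hle : (i.succ : Fin (r + 1)) ≤ j.castSucc := by
        rw [Fin.le_def]
        simp only [Fin.val_succ, Fin.coe_castSucc]
        exact hij
      exact ⟨hxj.1.1, le_trans (hFmono hle) hxj.1.2⟩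
    intro i j hij
    rcases hij.lt_or_gt with h | h
    · exact key i j h
    · exact (key j i h).symm
  · -- union is all coatoms
    ext C
    simp only [Set.mem_iUnion, Set.mem_setOf_eq]
    constructor
    · rintro ⟨i, hi⟩
      rw [hA i] at hi
      exact hi.1.1
    · intro hC
      have h0 : F 0 ≤ C := hF0 ▸ bot_le
      have hlast : ¬ F (Fin.last r) ≤ C := by
        rw [hFlast]
        intro h
        exact hC.1 (le_antisymm le_top h)
      obtain ⟨i, h1, h2⟩ := exists_flip (fun j => F j ≤ C) h0 hlast
      exact ⟨i, by rw [hA i]; exact ⟨⟨hC, h1⟩, fun hc => h2 hc.2⟩⟩
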